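/- Let m = (m_1,...,m_n) be nonzero polynomials over K[X], F an m-by-n matrix over K[X] with deg of column j of F less than deg(m_j), s a shift in Z^m, and w in Z^n with max(w) ≤ min(s). Set N = [F^T | diag(m_1,...,m_n)]^T, an (m+n)-by-n matrix, and u = (s, w) in Z^{m+n}. Then for any row vector [p | q] in K[X]^{1×(m+n)} with [p | q]·N = 0 and p ≠ 0, the u-pivot index of [p | q] lies in {1,...,m}; i.e., the u-degree of [p|q] is attained within the first m entries. -/

import Mathlib

open Polynomial

/-- for N = [Fᵀ | diag(m)]ᵀ and u = (s, w) with max(w) ≤ min(s),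
any [p | q] in the left nullspace of N with p ≠ 0 has its u-pivot index in the
first m entries: the u-degree is attained within the p-part, strictly
dominating the q-part. -/
theorem pivot_in_first_block {K : Type*} [Field K] {m n : ℕ}
    (M : Fin n → K[X]) (hM : ∀ j, M j ≠ 0)
    (F : Matrix (Fin m) (Fin n) K[X])
    (hF : ∀ i j, (F i j).degree < (M j).degree)
    (s : Fin m → ℤ) (w : Fin n → ℤ) (hws : ∀ j i, w j ≤ s i)
    (p : Fin m → K[X]) (q : Fin n → K[X]) (hp : p ≠ 0)
    (hnull : ∀ j, (∑ i, p i * F i j) + q j * M j = 0) :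
    ∃ i, p i ≠ 0 ∧
      (∀ k, p k ≠ 0 → ((p k).natDegree : ℤ) + s k ≤ ((p i).natDegree : ℤ) + s i) ∧
      (∀ j, q j ≠ 0 → ((q j).natDegree : ℤ) + w j < ((p i).natDegree : ℤ) + s i) := by
  classical
  obtain ⟨k0, hk0⟩ : ∃ k, p k ≠ 0 := by
    by_contra h; push_neg at h; exact hp (funext fun k => h k)
  set S := Finset.univ.filter (fun k => p k ≠ 0) with hSdef
  have hS : S.Nonempty := ⟨k0, by simp [hSdef, hk0]⟩
  obtain ⟨i, hiS, hi⟩ := S.exists_max_image (fun k => ((p k).natDegree : ℤ) + s k) hS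
  obtain ⟨k, hkS, hk⟩ := S.exists_max_image (fun k => (p k).natDegree) hS
  have hiS' : p i ≠ 0 := by simpa [hSdef] using hiS
  have hkS' : p k ≠ 0 := by simpa [hSdef] using hkS
  refine ⟨i, hiS', ?_, ?_⟩
  · intro a ha; exact hi a (by simp [hSdef, ha])
  · intro j hqj
    have hdeg : (q j).natDegree < (p k).natDegree := by
      have h1 : (q j * M j).degree = (∑ i, p i * F i j).degree := by
        have h0 : q j * M j = -∑ i, p i * F i j := by
          have := hnull j; linear_combination this
        rw [h0, degree_neg]
      have h2 : (∑ i, p i * F i j).degree <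
          (((p k).natDegree + (M j).natDegree : ℕ) : WithBot ℕ) := by
        refine lt_of_le_of_lt (degree_sum_le _ _) ?_
        rw [Finset.sup_lt_iff (by exact_mod_cast WithBot.bot_lt_coe _)]
        intro b _
        rcases eq_or_ne (p b) 0 with hb | hb
        · simp [hb]
        rcases eq_or_ne (F b j) 0 with hf | hf
        · simp [hf]
        refine lt_of_le_of_lt (degree_mul_le _ _) ?_
        rw [degree_eq_natDegree hb, degree_eq_natDegree hf]
        have hb' : (p b).natDegree ≤ (p k).natDegree := hk b (by simp [hSdef, hb])
        have hf' : (F b j).natDegree < (M j).natDegree := by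
          have := hF b j
          rw [degree_eq_natDegree hf, degree_eq_natDegree (hM j)] at this
          exact_mod_cast this
        have : (p b).natDegree + (F b j).natDegree < (p k).natDegree + (M j).natDegree :=
          by omega
        exact_mod_cast this
      have h3 : (q j * M j).degree =
          (((q j).natDegree + (M j).natDegree : ℕ) : WithBot ℕ) := by
        rw [degree_mul, degree_eq_natDegree hqj, degree_eq_natDegree (hM j)]
        push_cast; ring
      rw [← h1, h3] at h2
      have : (q j).natDegree + (M j).natDegree < (p k).natDegree + (M j).natDegree := by
        exact_mod_cast h2
      omega
    have hik : ((p k).natDegree : ℤ) + s k ≤ ((p i).natDegree : ℤ) + s i := hi k hkS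
    have := hws j k
    -- push_cast
    omega
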